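/- For every k ≥ 1, the function d(p,q) = k − l(p,q) is a metric on D(k): for all p, q, r ∈ D(k) one has l(p,q) ≤ k (so d(p,q) ≥ 0), d(p,q) = 0 if and only if p = q, d(p,q) = d(q,p), and d(p,q) ≤ d(p,r) + d(r,q). -/

import Mathlib

open scoped BigOperators

section MergeSetoid

variable {X : Type*}

/-- Merge the classes of `x` and `y` in a setoid. -/
def Setoid.merge (s : Setoid X) (x y : X) : Setoid X where
  r z w := s z w ∨ (s z x ∧ s y w) ∨ (s z y ∧ s x w)
  iseqv := by
    constructor
    · exact fun z => Or.inl (s.refl z)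
    · rintro z w (h | ⟨h1, h2⟩ | ⟨h1, h2⟩)
      · exact Or.inl (s.symm h)
      · exact Or.inr (Or.inr ⟨s.symm h2, s.symm h1⟩)
      · exact Or.inr (Or.inl ⟨s.symm h2, s.symm h1⟩)
    · rintro z w v (h | ⟨h1, h2⟩ | ⟨h1, h2⟩) (h' | ⟨h1', h2'⟩ | ⟨h1', h2'⟩)
      · exact Or.inl (s.trans h h')
      · exact Or.inr (Or.inl ⟨s.trans h h1', h2'⟩)
      · exact Or.inr (Or.inr ⟨s.trans h h1', h2'⟩)
      · exact Or.inr (Or.inl ⟨h1, s.trans h2 h'⟩)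
      · exact Or.inl (s.trans h1 (s.trans (s.symm (s.trans h2 h1')) h2'))
      · exact Or.inl (s.trans h1 h2')
      · exact Or.inr (Or.inr ⟨h1, s.trans h2 h'⟩)
      · exact Or.inl (s.trans h1 h2')
      · exact Or.inl (s.trans h1 (s.trans (s.symm (s.trans h2 h1')) h2'))

theorem Setoid.merge_rel_iff {s : Setoid X} {x y z w : X} :
    s.merge x y z w ↔ s z w ∨ (s z x ∧ s y w) ∨ (s z y ∧ s x w) := Iff.rfl

theorem Setoid.le_merge (s : Setoid X) (x y : X) : s ≤ s.merge x y :=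
  Setoid.le_def.mpr fun h => Or.inl h

theorem Setoid.merge_rel (s : Setoid X) (x y : X) : s.merge x y x y :=
  Or.inr (Or.inl ⟨s.refl x, s.refl y⟩)

theorem Setoid.merge_eq_self {s : Setoid X} {x y : X} (h : s x y) : s.merge x y = s := by
  apply Setoid.ext
  intro z w
  constructor
  · rintro (h' | ⟨h1, h2⟩ | ⟨h1, h2⟩)
    · exact h'
    · exact s.trans h1 (s.trans h h2)
    · exact s.trans h1 (s.trans (s.symm h) h2)
  · exact Or.inl

/-- The canonical surjection to the merged quotient. -/
noncomputable def mergeMap (s : Setoid X) (x y : X) :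
    Quotient s → Quotient (s.merge x y) :=
  Quotient.map' id fun _ _ hab => Or.inl hab

theorem mergeMap_mk (s : Setoid X) (x y z : X) :
    mergeMap s x y (Quotient.mk'' z) = Quotient.mk'' z := rfl

theorem card_quot_merge [Finite X] (s : Setoid X) {x y : X} (h : ¬ s x y) :
    Nat.card (Quotient s) = Nat.card (Quotient (s.merge x y)) + 1 := by
  classical
  set π := mergeMap s x y with hπ
  set φ : Quotient s → Quotient (s.merge x y) ⊕ Unit :=
    fun c => if c = Quotient.mk'' y then Sum.inr () else Sum.inl (π c) with hφ
  have hbij : Function.Bijective φ := by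
    constructor
    · intro c d hcd
      induction c using Quotient.inductionOn' with | h a =>
      induction d using Quotient.inductionOn' with | h b =>
      by_cases ha : (Quotient.mk'' a : Quotient s) = Quotient.mk'' y <;>
        by_cases hb : (Quotient.mk'' b : Quotient s) = Quotient.mk'' y <;>
          simp only [hφ, ha, hb, if_pos, if_neg, if_true, if_false] at hcd
      · rw [ha, hb]
      · exact absurd hcd (by simp)
      · exact absurd hcd (by simp)
      · have : (Quotient.mk'' a : Quotient (s.merge x y)) = Quotient.mk'' b := by
          simpa [π, mergeMap_mk] using hcd
        rcases Quotient.eq''.mp this with (h' | ⟨h1, h2⟩ | ⟨h1, h2⟩)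
        · exact Quotient.sound' h'
        · exact absurd (Quotient.sound' (s.symm h2) : (Quotient.mk'' b : Quotient s) = _) hb
        · exact absurd (Quotient.sound' h1 : (Quotient.mk'' a : Quotient s) = _) ha
    · intro t
      rcases t with d | u
      · induction d using Quotient.inductionOn' with | h a =>
        by_cases ha : (Quotient.mk'' a : Quotient s) = Quotient.mk'' y
        · refine ⟨Quotient.mk'' x, ?_⟩
          have hx : (Quotient.mk'' x : Quotient s) ≠ Quotient.mk'' y := by
            intro hc
            exact h (Quotient.eq''.mp hc)
          have hay : s a y := Quotient.eq''.mp ha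
          have : (Quotient.mk'' x : Quotient (s.merge x y)) = Quotient.mk'' a :=
            Quotient.sound' (Or.inr (Or.inl ⟨s.refl x, s.symm hay⟩))
          simp only [hφ, if_neg hx, π, mergeMap_mk, this]
        · refine ⟨Quotient.mk'' a, ?_⟩
          simp only [hφ, if_neg ha, π, mergeMap_mk]
      · exact ⟨Quotient.mk'' y, by simp [hφ]⟩
  have := Nat.card_eq_of_bijective φ hbij
  rw [this, Nat.card_sum]
  simp

theorem card_quot_mono [Finite X] {s t : Setoid X} (h : s ≤ t) :
    Nat.card (Quotient t) ≤ Nat.card (Quotient s) := by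
  apply Nat.card_le_card_of_surjective (Quotient.map' id fun a b hab => Setoid.le_def.mp h hab)
  intro c
  induction c using Quotient.inductionOn' with | h a =>
  exact ⟨Quotient.mk'' a, rfl⟩

end MergeSetoid
section Key
variable {X : Type*}

theorem setoid_submodular_aux [Finite X] :
    ∀ n (s a b : Setoid X), Nat.card (Quotient s) = n → s ≤ a → s ≤ b →
      Nat.card (Quotient a) + Nat.card (Quotient b) ≤
        n + Nat.card (Quotient (a ⊔ b)) := by
  intro n
  induction n using Nat.strong_induction_on with
  | _ n ih =>
    intro s a b hn hsa hsb
    by_cases has : a ≤ s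
    · have hA : a = s := le_antisymm has hsa
      have hsup : a ⊔ b = b := sup_eq_right.mpr (hA ▸ hsb)
      rw [hsup, hA, hn]
    · have hex : ∃ x y, a x y ∧ ¬ s x y := by
        by_contra hc
        push_neg at hc
        exact has (Setoid.le_def.mpr fun {x y} hxy => hc x y hxy)
      obtain ⟨x, y, hxy, hnxy⟩ := hex
      have hcard : Nat.card (Quotient s) = Nat.card (Quotient (s.merge x y)) + 1 :=
        card_quot_merge s hnxy
      have hs'a : s.merge x y ≤ a := by
        refine Setoid.le_def.mpr ?_
        rintro z w (h | ⟨h1, h2⟩ | ⟨h1, h2⟩)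
        · exact Setoid.le_def.mp hsa h
        · exact a.trans (Setoid.le_def.mp hsa h1) (a.trans hxy (Setoid.le_def.mp hsa h2))
        · exact a.trans (Setoid.le_def.mp hsa h1)
            (a.trans (a.symm hxy) (Setoid.le_def.mp hsa h2))
      have hs'b' : s.merge x y ≤ b.merge x y := by
        refine Setoid.le_def.mpr ?_
        rintro z w (h | ⟨h1, h2⟩ | ⟨h1, h2⟩)
        · exact Or.inl (Setoid.le_def.mp hsb h)
        · exact Or.inr (Or.inl ⟨Setoid.le_def.mp hsb h1, Setoid.le_def.mp hsb h2⟩)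
        · exact Or.inr (Or.inr ⟨Setoid.le_def.mp hsb h1, Setoid.le_def.mp hsb h2⟩)
      have hbb' : Nat.card (Quotient b) ≤ Nat.card (Quotient (b.merge x y)) + 1 := by
        by_cases hbxy : b x y
        · rw [Setoid.merge_eq_self hbxy]; omega
        · exact le_of_eq (card_quot_merge b hbxy)
      have hsup : a ⊔ b.merge x y = a ⊔ b := by
        apply le_antisymm
        · refine sup_le le_sup_left ?_
          refine Setoid.le_def.mpr ?_
          rintro z w (h | ⟨h1, h2⟩ | ⟨h1, h2⟩)
          · exact Setoid.le_def.mp le_sup_right h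
          · exact (a ⊔ b).trans (Setoid.le_def.mp le_sup_right h1)
              ((a ⊔ b).trans (Setoid.le_def.mp le_sup_left hxy)
                (Setoid.le_def.mp le_sup_right h2))
          · exact (a ⊔ b).trans (Setoid.le_def.mp le_sup_right h1)
              ((a ⊔ b).trans ((a ⊔ b).symm (Setoid.le_def.mp le_sup_left hxy))
                (Setoid.le_def.mp le_sup_right h2))
        · exact sup_le le_sup_left (le_trans (Setoid.le_merge b x y) le_sup_right)
      have hind := ih (Nat.card (Quotient (s.merge x y))) (by omega)
        (s.merge x y) a (b.merge x y) rfl hs'a hs'b'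
      rw [hsup] at hind
      omega

theorem setoid_submodular [Finite X] (s a b : Setoid X) (hsa : s ≤ a) (hsb : s ≤ b) :
    Nat.card (Quotient a) + Nat.card (Quotient b) ≤
      Nat.card (Quotient s) + Nat.card (Quotient (a ⊔ b)) :=
  setoid_submodular_aux _ s a b rfl hsa hsb

end Key
section OrbitLemmas

open MulAction

variable {G : Type*} [Group G] {α : Type*} [MulAction G α]

theorem orbitRel_subgroup_mono {H K : Subgroup G} (h : H ≤ K) :
    orbitRel H α ≤ orbitRel K α := by
  refine Setoid.le_def.mpr ?_
  intro x y hxy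
  rw [orbitRel_apply] at hxy ⊢
  obtain ⟨⟨g, hg⟩, hgx⟩ := hxy
  exact ⟨⟨g, h hg⟩, hgx⟩

theorem orbitRel_subgroup_rel (H : Subgroup G) {g : G} (hg : g ∈ H) (x : α) :
    orbitRel H α (g • x) x := by
  rw [orbitRel_apply]
  exact ⟨⟨g, hg⟩, rfl⟩

theorem orbitRel_closure_le (S : Set G) (T : Setoid α)
    (hT : ∀ g ∈ S, ∀ x : α, T (g • x) x) :
    orbitRel (Subgroup.closure S) α ≤ T := by
  have key : ∀ g ∈ Subgroup.closure S, ∀ z : α, T (g • z) z := by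
    intro g hg
    induction hg using Subgroup.closure_induction with
    | mem g hgS => exact hT g hgS
    | one => intro z; simpa using T.refl z
    | mul g h _ _ ihg ihh =>
      intro z
      rw [mul_smul]
      exact T.trans (ihg (h • z)) (ihh z)
    | inv g _ ihg =>
      intro z
      have := ihg (g⁻¹ • z)
      rw [smul_inv_smul] at this
      exact T.symm this
  refine Setoid.le_def.mpr ?_
  intro x y hxy
  rw [orbitRel_apply] at hxy
  obtain ⟨⟨g, hg⟩, rfl⟩ := hxy
  exact key g hg y

variable (G α) in
theorem card_eq_sum_card_orbits [Fintype α] :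
    haveI : Finite (orbitRel.Quotient G α) := Quotient.finite _
    haveI : Fintype (orbitRel.Quotient G α) := Fintype.ofFinite _
    Nat.card α = ∑ ω : orbitRel.Quotient G α, Nat.card (orbit G ω.out) := by
  haveI : Finite (orbitRel.Quotient G α) := Quotient.finite _
  haveI : Fintype (orbitRel.Quotient G α) := Fintype.ofFinite _
  classical
  rw [Nat.card_congr (selfEquivSigmaOrbits G α)]
  haveI : ∀ ω : orbitRel.Quotient G α, Fintype (orbit G ω.out) :=
    fun ω => Fintype.ofFinite _
  rw [Nat.card_eq_fintype_card, Fintype.card_sigma]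
  simp only [Nat.card_eq_fintype_card]
  congr!

end OrbitLemmas
section OrbitCount

open MulAction

variable {G : Type*} [Group G] {α : Type*} [MulAction G α]

variable (G α) in
theorem card_eq_sum_card_orbits' [Fintype α] [inst : Fintype (orbitRel.Quotient G α)] :
    Nat.card α = ∑ ω : orbitRel.Quotient G α, Nat.card (orbit G ω.out) := by
  classical
  rw [Nat.card_congr (selfEquivSigmaOrbits G α)]
  haveI : ∀ ω : orbitRel.Quotient G α, Fintype (orbit G ω.out) :=
    fun _ => Fintype.ofFinite _
  rw [Nat.card_eq_fintype_card, Fintype.card_sigma]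
  simp only [Nat.card_eq_fintype_card]

variable (G α) in
theorem two_mul_card_orbits_le [Fintype α]
    (hnt : ∀ ω : orbitRel.Quotient G α, 2 ≤ Nat.card (orbit G ω.out)) :
    2 * Nat.card (orbitRel.Quotient G α) ≤ Nat.card α := by
  haveI : Finite (orbitRel.Quotient G α) := Quotient.finite _
  letI inst : Fintype (orbitRel.Quotient G α) := Fintype.ofFinite _
  rw [card_eq_sum_card_orbits' G α, Nat.card_eq_fintype_card (α := orbitRel.Quotient G α)]
  calc 2 * Fintype.card (orbitRel.Quotient G α)
      = ∑ _ω : orbitRel.Quotient G α, 2 := by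
        rw [Finset.sum_const, Finset.card_univ, smul_eq_mul, mul_comm]
    _ ≤ _ := Finset.sum_le_sum fun ω _ => hnt ω

variable (G α) in
theorem card_orbit_eq_two_of_card_eq [Fintype α]
    (hnt : ∀ ω : orbitRel.Quotient G α, 2 ≤ Nat.card (orbit G ω.out))
    (heq : 2 * Nat.card (orbitRel.Quotient G α) = Nat.card α) :
    ∀ x : α, Nat.card (orbit G x) = 2 := by
  haveI : Finite (orbitRel.Quotient G α) := Quotient.finite _
  letI inst : Fintype (orbitRel.Quotient G α) := Fintype.ofFinite _
  have hall : ∀ ω : orbitRel.Quotient G α, Nat.card (orbit G ω.out) = 2 := by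
    by_contra hc
    push_neg at hc
    obtain ⟨ω₀, hω₀⟩ := hc
    have hlt : (∑ _ω : orbitRel.Quotient G α, 2) <
        ∑ ω : orbitRel.Quotient G α, Nat.card (orbit G ω.out) := by
      refine Finset.sum_lt_sum (fun ω _ => hnt ω) ⟨ω₀, Finset.mem_univ _, ?_⟩
      exact lt_of_le_of_ne (hnt ω₀) (Ne.symm hω₀)
    rw [Finset.sum_const, Finset.card_univ, smul_eq_mul] at hlt
    rw [card_eq_sum_card_orbits' G α, Nat.card_eq_fintype_card (α := orbitRel.Quotient G α),
      mul_comm] at heq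
    omega
  intro x
  have hout : ((Quotient.mk'' x : orbitRel.Quotient G α).out) ∈ orbit G x := by
    rw [← orbitRel_apply (G := G)]
    exact Quotient.eq''.mp (Quotient.out_eq' (Quotient.mk'' x : orbitRel.Quotient G α))
  have := hall (Quotient.mk'' x)
  rwa [orbit_eq_iff.mpr hout] at this

variable (G α) in
theorem card_orbits_eq_of_forall_two [Fintype α]
    (h2 : ∀ x : α, Nat.card (orbit G x) = 2) :
    2 * Nat.card (orbitRel.Quotient G α) = Nat.card α := by
  haveI : Finite (orbitRel.Quotient G α) := Quotient.finite _
  letI inst : Fintype (orbitRel.Quotient G α) := Fintype.ofFinite _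
  rw [card_eq_sum_card_orbits' G α, Nat.card_eq_fintype_card (α := orbitRel.Quotient G α)]
  rw [Finset.sum_congr rfl (fun ω _ => h2 ω.out), Finset.sum_const, Finset.card_univ,
    smul_eq_mul, mul_comm]

end OrbitCount


open scoped BigOperators

/-- Non-crossing pair partitions of {1,…,2k}: fixed-point-free non-crossing
involutions of `Fin (2*k)`. -/
def NCPair (k : ℕ) : Type :=
  {p : Equiv.Perm (Fin (2 * k)) //
    (∀ x, p (p x) = x) ∧ (∀ x, p x ≠ x) ∧
    ∀ a b c d : Fin (2 * k), a < b → b < c → c < d → p a = c → p b = d → False}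

instance (k : ℕ) : Fintype (NCPair k) := by unfold NCPair; infer_instance

instance (k : ℕ) : DecidableEq (NCPair k) := by unfold NCPair; infer_instance

/-- `loops p q`: the number of loops obtained by closing the composed diagram,
i.e. the number of orbits of the subgroup generated by `p` and `q` on `Fin (2*k)`. -/
noncomputable def loops {k : ℕ} (p q : NCPair k) : ℕ :=
  Nat.card (MulAction.orbitRel.Quotient
    (↥(Subgroup.closure ({p.1, q.1} : Set (Equiv.Perm (Fin (2 * k)))))) (Fin (2 * k)))

/-- The Gram matrix `G_{kn}(p,q) = n^{l(p,q)}`. -/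
noncomputable def Gram (k n : ℕ) : Matrix (NCPair k) (NCPair k) ℝ :=
  fun p q => (n : ℝ) ^ loops p q

/-- The loop distance `d(p,q) = k - l(p,q)`. -/
noncomputable def loopDist {k : ℕ} (p q : NCPair k) : ℕ := k - loops p q

section NCPairLemmas

open MulAction

variable {k : ℕ}

theorem NCPair.orbit_two_le (p : NCPair k) (H : Subgroup (Equiv.Perm (Fin (2 * k))))
    (hp : p.1 ∈ H) (x : Fin (2 * k)) : 2 ≤ Nat.card (orbit H x) := by
  have hnt : Nontrivial (orbit H x) := by
    refine ⟨⟨x, mem_orbit_self x⟩, ⟨p.1 • x, ⟨⟨p.1, hp⟩, rfl⟩⟩, ?_⟩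
    intro hcontra
    apply p.2.2.1 x
    have := congrArg Subtype.val hcontra
    simpa [Equiv.Perm.smul_def] using this.symm
  have := Finite.one_lt_card_iff_nontrivial.mpr hnt
  omega

theorem NCPair.loops_card (p q : NCPair k) :
    loops p q = Nat.card (Quotient
      (orbitRel (Subgroup.closure ({p.1, q.1} : Set (Equiv.Perm (Fin (2 * k)))))
        (Fin (2 * k)))) := rfl

theorem NCPair.two_mul_loops_le (p q : NCPair k) : 2 * loops p q ≤ 2 * k := by
  have h := two_mul_card_orbits_le
    (Subgroup.closure ({p.1, q.1} : Set (Equiv.Perm (Fin (2 * k))))) (Fin (2 * k))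
    (fun ω => NCPair.orbit_two_le p _ (Subgroup.subset_closure (Set.mem_insert _ _)) _)
  simpa [Nat.card_eq_fintype_card, loops] using h

theorem NCPair.loops_le (p q : NCPair k) : loops p q ≤ k := by
  have := NCPair.two_mul_loops_le p q; omega

theorem NCPair.eq_of_loops_eq (p q : NCPair k) (h : loops p q = k) : p = q := by
  set H := Subgroup.closure ({p.1, q.1} : Set (Equiv.Perm (Fin (2 * k)))) with hH
  have hpH : p.1 ∈ H := Subgroup.subset_closure (Set.mem_insert _ _)
  have hqH : q.1 ∈ H := Subgroup.subset_closure (Set.mem_insert_of_mem _ rfl)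
  have heq : 2 * Nat.card (orbitRel.Quotient H (Fin (2 * k))) = Nat.card (Fin (2 * k)) := by
    have : Nat.card (orbitRel.Quotient H (Fin (2 * k))) = loops p q := rfl
    rw [this, h]
    simp [Nat.card_eq_fintype_card]
  have h2 : ∀ x : Fin (2 * k), Nat.card (orbit H x) = 2 :=
    card_orbit_eq_two_of_card_eq H (Fin (2 * k))
      (fun ω => NCPair.orbit_two_le p _ hpH _) heq
  have hpq : ∀ x : Fin (2 * k), p.1 x = q.1 x := by
    intro x
    by_contra hne
    letI : Fintype (orbit H x) := Fintype.ofFinite _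
    have hlt : 2 < Fintype.card (orbit H x) := by
      refine Fintype.two_lt_card_iff.mpr
        ⟨⟨x, mem_orbit_self x⟩, ⟨p.1 • x, ⟨⟨p.1, hpH⟩, rfl⟩⟩, ⟨q.1 • x, ⟨⟨q.1, hqH⟩, rfl⟩⟩,
          ?_, ?_, ?_⟩
      · intro hcontra
        exact p.2.2.1 x (by simpa [Equiv.Perm.smul_def] using
          (congrArg Subtype.val hcontra).symm)
      · intro hcontra
        exact q.2.2.1 x (by simpa [Equiv.Perm.smul_def] using
          (congrArg Subtype.val hcontra).symm)
      · intro hcontra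
        exact hne (by simpa [Equiv.Perm.smul_def] using congrArg Subtype.val hcontra)
    rw [← Nat.card_eq_fintype_card, h2 x] at hlt
    omega
  exact Subtype.ext (Equiv.ext hpq)

theorem NCPair.loops_self (p : NCPair k) : loops p p = k := by
  have hset : ({p.1, p.1} : Set (Equiv.Perm (Fin (2 * k)))) = {p.1} := by simp
  set H := Subgroup.closure ({p.1} : Set (Equiv.Perm (Fin (2 * k)))) with hH
  have hloops : loops p p = Nat.card (orbitRel.Quotient H (Fin (2 * k))) := by
    unfold loops
    rw [hset]
  have key : ∀ g ∈ H, ∀ z : Fin (2 * k), g • z = z ∨ g • z = p.1 z := by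
    intro g hg
    induction hg using Subgroup.closure_induction with
    | mem g hgS =>
      intro z
      rcases hgS with rfl
      exact Or.inr rfl
    | one => intro z; exact Or.inl (one_smul _ _)
    | mul g h _ _ ihg ihh =>
      intro z
      rw [mul_smul]
      rcases ihh z with h1 | h1
      · rw [h1]; exact ihg z
      · rw [h1]
        rcases ihg (p.1 z) with h2 | h2
        · exact Or.inr h2
        · left
          rw [h2, Equiv.Perm.smul_def] at *
          exact p.2.1 z
    | inv g _ ihg =>
      intro z
      rcases ihg (g⁻¹ • z) with h1 | h1
      · rw [smul_inv_smul] at h1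
        exact Or.inl (by rw [← h1])
      · rw [smul_inv_smul] at h1
        right
        rw [Equiv.Perm.smul_def] at *
        have := congrArg p.1 h1
        rw [p.2.1] at this
        exact this.symm
  have h2 : ∀ x : Fin (2 * k), Nat.card (orbit H x) = 2 := by
    intro x
    have hsub : orbit H x ⊆ ({x, p.1 x} : Set (Fin (2 * k))) := by
      rintro _ ⟨⟨g, hg⟩, rfl⟩
      show g • x ∈ ({x, p.1 x} : Set (Fin (2 * k)))
      rcases key g hg x with h1 | h1 <;> rw [h1]
      · exact Set.mem_insert _ _
      · exact Set.mem_insert_of_mem _ rfl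
    have hle : Nat.card (orbit H x) ≤ 2 := by
      rw [Nat.card_coe_set_eq]
      calc (orbit H x).ncard ≤ ({x, p.1 x} : Set (Fin (2 * k))).ncard :=
            Set.ncard_le_ncard hsub (Set.toFinite _)
        _ = 2 := Set.ncard_pair (Ne.symm (p.2.2.1 x))
    have hge : 2 ≤ Nat.card (orbit H x) :=
      NCPair.orbit_two_le p H (Subgroup.subset_closure rfl) x
    omega
  have := card_orbits_eq_of_forall_two H (Fin (2 * k)) h2
  rw [← hloops] at this
  simp [Nat.card_eq_fintype_card] at this
  omega

theorem NCPair.loops_comm (p q : NCPair k) : loops p q = loops q p := by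
  unfold loops
  rw [Set.pair_comm]

theorem NCPair.loops_triangle (p r q : NCPair k) :
    loops p r + loops r q ≤ k + loops p q := by
  have hset1 : ({r.1} : Set (Equiv.Perm (Fin (2 * k)))) ⊆ {p.1, r.1} := by
    intro g hg; rcases hg with rfl; exact Set.mem_insert_of_mem _ rfl
  have hset2 : ({r.1} : Set (Equiv.Perm (Fin (2 * k)))) ⊆ {r.1, q.1} := by
    intro g hg; rcases hg with rfl; exact Set.mem_insert _ _
  have hsa : orbitRel (Subgroup.closure ({r.1} : Set (Equiv.Perm (Fin (2 * k))))) (Fin (2 * k)) ≤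
      orbitRel (Subgroup.closure ({p.1, r.1} : Set (Equiv.Perm (Fin (2 * k))))) (Fin (2 * k)) :=
    orbitRel_subgroup_mono (Subgroup.closure_mono hset1)
  have hsb : orbitRel (Subgroup.closure ({r.1} : Set (Equiv.Perm (Fin (2 * k))))) (Fin (2 * k)) ≤
      orbitRel (Subgroup.closure ({r.1, q.1} : Set (Equiv.Perm (Fin (2 * k))))) (Fin (2 * k)) :=
    orbitRel_subgroup_mono (Subgroup.closure_mono hset2)
  have hsub := setoid_submodular _ _ _ hsa hsb
  have hcards : Nat.card (Quotient
      (orbitRel (Subgroup.closure ({r.1} : Set (Equiv.Perm (Fin (2 * k))))) (Fin (2 * k)))) = k := by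
    have h1 : loops r r = Nat.card (Quotient
        (orbitRel (Subgroup.closure ({r.1} : Set (Equiv.Perm (Fin (2 * k))))) (Fin (2 * k)))) := by
      unfold loops
      rw [show ({r.1, r.1} : Set (Equiv.Perm (Fin (2 * k)))) = {r.1} by simp]
    rw [← h1, NCPair.loops_self]
  have hcarda : Nat.card (Quotient
      (orbitRel (Subgroup.closure ({p.1, r.1} : Set (Equiv.Perm (Fin (2 * k))))) (Fin (2 * k)))) =
      loops p r := rfl
  have hcardb : Nat.card (Quotient
      (orbitRel (Subgroup.closure ({r.1, q.1} : Set (Equiv.Perm (Fin (2 * k))))) (Fin (2 * k)))) =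
      loops r q := rfl
  have hle : orbitRel (Subgroup.closure ({p.1, q.1} : Set (Equiv.Perm (Fin (2 * k))))) (Fin (2 * k)) ≤
      orbitRel (Subgroup.closure ({p.1, r.1} : Set (Equiv.Perm (Fin (2 * k))))) (Fin (2 * k)) ⊔
      orbitRel (Subgroup.closure ({r.1, q.1} : Set (Equiv.Perm (Fin (2 * k))))) (Fin (2 * k)) := by
    have hsupl : orbitRel (Subgroup.closure ({p.1, r.1} : Set (Equiv.Perm (Fin (2 * k))))) (Fin (2 * k)) ≤
        orbitRel (Subgroup.closure ({p.1, r.1} : Set (Equiv.Perm (Fin (2 * k))))) (Fin (2 * k)) ⊔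
        orbitRel (Subgroup.closure ({r.1, q.1} : Set (Equiv.Perm (Fin (2 * k))))) (Fin (2 * k)) :=
      le_sup_left
    have hsupr : orbitRel (Subgroup.closure ({r.1, q.1} : Set (Equiv.Perm (Fin (2 * k))))) (Fin (2 * k)) ≤
        orbitRel (Subgroup.closure ({p.1, r.1} : Set (Equiv.Perm (Fin (2 * k))))) (Fin (2 * k)) ⊔
        orbitRel (Subgroup.closure ({r.1, q.1} : Set (Equiv.Perm (Fin (2 * k))))) (Fin (2 * k)) :=
      le_sup_right
    apply orbitRel_closure_le
    intro g hg x
    rcases hg with rfl | hg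
    · exact Setoid.le_def.mp hsupl
        (orbitRel_subgroup_rel
          (Subgroup.closure ({p.1, r.1} : Set (Equiv.Perm (Fin (2 * k)))))
          (Subgroup.subset_closure (Set.mem_insert _ _)) x)
    · rcases hg with rfl
      exact Setoid.le_def.mp hsupr
        (orbitRel_subgroup_rel
          (Subgroup.closure ({r.1, q.1} : Set (Equiv.Perm (Fin (2 * k)))))
          (Subgroup.subset_closure (Set.mem_insert_of_mem _ (Set.mem_singleton _))) x)
  have hmono : Nat.card (Quotient
      (orbitRel (Subgroup.closure ({p.1, r.1} : Set (Equiv.Perm (Fin (2 * k))))) (Fin (2 * k)) ⊔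
       orbitRel (Subgroup.closure ({r.1, q.1} : Set (Equiv.Perm (Fin (2 * k))))) (Fin (2 * k)))) ≤
      loops p q := by
    have h2 := card_quot_mono hle
    exact le_trans h2 (le_of_eq (NCPair.loops_card p q).symm)
  omega

end NCPairLemmas

theorem loopDist_is_metric (k : ℕ) (hk : 1 ≤ k) (p q r : NCPair k) :
    loops p q ≤ k ∧
    (loopDist p q = 0 ↔ p = q) ∧
    loopDist p q = loopDist q p ∧
    loopDist p q ≤ loopDist p r + loopDist r q := by
  have hle := NCPair.loops_le p q
  refine ⟨hle, ?_, ?_, ?_⟩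
  · constructor
    · intro h
      apply NCPair.eq_of_loops_eq p q
      unfold loopDist at h
      omega
    · rintro rfl
      unfold loopDist
      rw [NCPair.loops_self]
      omega
  · unfold loopDist
    rw [NCPair.loops_comm]
  · have h1 := NCPair.loops_triangle p r q
    have h2 := NCPair.loops_le p r
    have h3 := NCPair.loops_le r q
    unfold loopDist
    omega
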